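/- For a maximal right ideal M of a ring R, the following are equivalent: (1) rl(M) = M; (2) l(M) ≠ 0; (3) R/M is isomorphic to a submodule of soc(R_R); (4) Hom_R(R/M, R) ≠ 0. -/

import Mathlib

/-- The left annihilator of a subset `X` of a ring. -/
def lAnn {R : Type*} [Ring R] (X : Set R) : Set R := {a | ∀ x ∈ X, a * x = 0}

/-- The right annihilator of a subset `X` of a ring. -/
def rAnn {R : Type*} [Ring R] (X : Set R) : Set R := {a | ∀ x ∈ X, x * a = 0}

/-- The right socle of `R`: the sum of all simple right ideals. -/
def rightSocle (R : Type*) [Ring R] : Submodule Rᵐᵒᵖ R :=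
  sSup {T : Submodule Rᵐᵒᵖ R | IsSimpleModule Rᵐᵒᵖ ↥T}

/-- For a maximal right ideal `M` of `R`, TFAE:
(1) `rl(M) = M`; (2) `l(M) ≠ 0`; (3) `R/M` embeds into `soc(R_R)`;
(4) `Hom_R(R/M, R) ≠ 0`. -/
theorem stmt12 {R : Type*} [Ring R] (M : Submodule Rᵐᵒᵖ R) (hM : IsCoatom M) :
    List.TFAE [
      rAnn (lAnn (M : Set R)) = (M : Set R),
      lAnn (M : Set R) ≠ {0},
      ∃ T : Submodule Rᵐᵒᵖ R, T ≤ rightSocle R ∧ Nonempty ((R ⧸ M) ≃ₗ[Rᵐᵒᵖ] ↥T),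
      ∃ φ : (R ⧸ M) →ₗ[Rᵐᵒᵖ] R, φ ≠ 0 ] := by
  have hsimple : IsSimpleModule Rᵐᵒᵖ (R ⧸ M) := isSimpleModule_iff_isCoatom.mpr hM
  tfae_have 1 → 2 := by
    intro h1 h2
    rw [h2] at h1
    have h1' : (1 : R) ∈ rAnn ({0} : Set R) := by
      intro x hx; simp at hx; simp [hx]
    rw [h1] at h1'
    exact hM.1 (Submodule.eq_top_iff'.mpr fun x => by
      have : (x : R) ∈ rAnn ({0} : Set R) := fun y hy => by simp at hy; simp [hy]
      rwa [h1] at this)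
  tfae_have 2 → 1 := by
    intro h2
    -- N : the right ideal rAnn (lAnn M)
    set N : Submodule Rᵐᵒᵖ R :=
      { carrier := rAnn (lAnn (M : Set R))
        zero_mem' := fun x _ => mul_zero x
        add_mem' := fun {a b} ha hb x hx => by
          rw [mul_add, ha x hx, hb x hx, add_zero]
        smul_mem' := fun r a ha x hx => by
          show x * (a * r.unop) = 0
          rw [← mul_assoc, ha x hx, zero_mul] } with hN
    have hMN : M ≤ N := fun a haM x hx => hx a haM
    rcases eq_or_lt_of_le hMN with heq | hlt
    · exact (congrArg SetLike.coe heq).symm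
    · exfalso
      have hNtop : N = ⊤ := hM.2 N hlt
      apply h2
      apply Set.eq_of_subset_of_subset
      · intro a ha
        have h1N : (1 : R) ∈ N := hNtop ▸ Submodule.mem_top
        have := h1N a ha
        simpa using this
      · intro a ha
        simp only [Set.mem_singleton_iff] at ha
        subst ha
        exact fun x _ => zero_mul x
  tfae_have 2 → 4 := by
    intro h2
    have h0 : (0 : R) ∈ lAnn (M : Set R) := fun x _ => zero_mul x
    have : ∃ a ∈ lAnn (M : Set R), a ≠ 0 := by
      by_contra hc
      push_neg at hc
      exact h2 (Set.eq_of_subset_of_subset (fun a ha => hc a ha)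
        (fun a ha => by simp only [Set.mem_singleton_iff] at ha; subst ha; exact h0))
    obtain ⟨a, haM, ha0⟩ := this
    let f : R →ₗ[Rᵐᵒᵖ] R :=
      { toFun := fun x => a * x
        map_add' := fun x y => mul_add a x y
        map_smul' := fun r x => by
          show a * (x * r.unop) = (a * x) * r.unop
          rw [mul_assoc] }
    have hf : M ≤ LinearMap.ker f := fun m hm => by
      show a * m = 0
      exact haM m hm
    refine ⟨M.liftQ f hf, fun h0' => ha0 ?_⟩
    have : M.liftQ f hf (Submodule.Quotient.mk 1) = 0 := by rw [h0']; rfl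
    simpa [f] using this
  tfae_have 4 → 2 := by
    rintro ⟨φ, hφ⟩ h2
    set a : R := φ (Submodule.Quotient.mk 1) with ha
    have haM : a ∈ lAnn (M : Set R) := by
      intro m hm
      have : a * m = φ ((MulOpposite.op m) • Submodule.Quotient.mk (1 : R)) := by
        rw [map_smul]; rfl
      rw [this, ← Submodule.Quotient.mk_smul]
      show φ (Submodule.Quotient.mk ((1 : R) * m)) = 0
      rw [one_mul, (Submodule.Quotient.mk_eq_zero M).mpr hm, map_zero]
    have ha0 : a = 0 := by rw [h2] at haM; exact haM
    apply hφ
    apply LinearMap.ext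
    intro x
    refine Quotient.inductionOn' x (fun y => ?_)
    show φ (Submodule.Quotient.mk y) = 0
    have : Submodule.Quotient.mk (p := M) y =
        (MulOpposite.op y) • Submodule.Quotient.mk (1 : R) := by
      rw [← Submodule.Quotient.mk_smul]
      show _ = Submodule.Quotient.mk ((1 : R) * y)
      rw [one_mul]
    rw [this, map_smul]
    show a * y = 0
    rw [ha0, zero_mul]
  tfae_have 4 → 3 := by
    rintro ⟨φ, hφ⟩
    have hker : LinearMap.ker φ = ⊥ := by
      rcases eq_bot_or_eq_top (LinearMap.ker φ) with h | h
      · exact h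
      · exact absurd (LinearMap.ker_eq_top.mp h) hφ
    have hinj : Function.Injective φ := LinearMap.ker_eq_bot.mp hker
    refine ⟨LinearMap.range φ, ?_, ⟨LinearEquiv.ofInjective φ hinj⟩⟩
    have : IsSimpleModule Rᵐᵒᵖ ↥(LinearMap.range φ) :=
      IsSimpleModule.congr (LinearEquiv.ofInjective φ hinj).symm
    exact le_sSup this
  tfae_have 3 → 4 := by
    rintro ⟨T, _, ⟨e⟩⟩
    refine ⟨T.subtype ∘ₗ e.toLinearMap, fun h0 => ?_⟩
    have hnt : Nontrivial (R ⧸ M) := Submodule.Quotient.nontrivial_iff.mpr hM.1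
    obtain ⟨x, hx⟩ := exists_ne (0 : R ⧸ M)
    have : (T.subtype ∘ₗ e.toLinearMap) x = 0 := by rw [h0]; rfl
    simp only [LinearMap.comp_apply, Submodule.subtype_apply,
      Submodule.coe_eq_zero] at this
    exact hx (e.injective (by simpa using this))
  tfae_finish
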